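/- Let p ∈ ℝ ∖ {0, −1}, and let f : (0,∞) → (0,∞) be continuously differentiable and strictly increasing, such that the function x ↦ f(x)^{p−1} · f'(x) is increasing. Then for all x, y ∈ (0,∞) with y < x, J_p(f(x), f(y)) ≥ (1/(x−y)) · ∫_y^x f(u) du. -/

import Mathlib

open Set MeasureTheory intervalIntegral

/-- The Alzer mean `J_p(a,b) = (p/(p+1)) * (a^(p+1) - b^(p+1))/(a^p - b^p)`
of distinct positive reals `a`, `b`, for `p ∉ {0, -1}`. -/
noncomputable def alzer (p a b : ℝ) : ℝ :=
  (p / (p + 1)) * ((a ^ (p + 1) - b ^ (p + 1)) / (a ^ p - b ^ p))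

/-- Chebyshev's integral inequality for two monotone continuous functions. -/
lemma cheb_integral {g h : ℝ → ℝ} {y x : ℝ} (hyx : y < x)
    (hgc : ContinuousOn g (Icc y x)) (hhc : ContinuousOn h (Icc y x))
    (hg : MonotoneOn g (Icc y x)) (hh : MonotoneOn h (Icc y x)) :
    (∫ u in y..x, g u) * (∫ u in y..x, h u) ≤ (x - y) * ∫ u in y..x, g u * h u := by
  have hghc : ContinuousOn (fun u => g u * h u) (Icc y x) := hgc.mul hhc
  set F : ℝ → ℝ := fun t => (t - y) * (∫ u in y..t, g u * h u)
      - (∫ u in y..t, g u) * (∫ u in y..t, h u) with hF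
  have huIcc : uIcc y x = Icc y x := uIcc_of_le hyx.le
  -- derivative of F on the interior
  have hderiv : ∀ t ∈ Ioo y x, HasDerivAt F
      (((∫ u in y..t, g u * h u) + (t - y) * (g t * h t))
        - (g t * (∫ u in y..t, h u) + (∫ u in y..t, g u) * h t)) t := by
    intro t ht
    have htIcc : Icc y t ⊆ Icc y x := Icc_subset_Icc le_rfl ht.2.le
    have hu : uIcc y t = Icc y t := uIcc_of_le ht.1.le
    have kg : IntervalIntegrable g volume y t := by
      apply ContinuousOn.intervalIntegrable; rw [hu]; exact hgc.mono htIcc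
    have kh : IntervalIntegrable h volume y t := by
      apply ContinuousOn.intervalIntegrable; rw [hu]; exact hhc.mono htIcc
    have kgh : IntervalIntegrable (fun u => g u * h u) volume y t := by
      apply ContinuousOn.intervalIntegrable; rw [hu]; exact hghc.mono htIcc
    have hmem : Icc y x ∈ nhds t := Icc_mem_nhds ht.1 ht.2
    have cg : ContinuousAt g t := hgc.continuousAt hmem
    have ch : ContinuousAt h t := hhc.continuousAt hmem
    have cgh : ContinuousAt (fun u => g u * h u) t := cg.mul ch
    have mg : StronglyMeasurableAtFilter g (nhds t) volume :=
      (hgc.mono Ioo_subset_Icc_self).stronglyMeasurableAtFilter isOpen_Ioo t ht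
    have mh : StronglyMeasurableAtFilter h (nhds t) volume :=
      (hhc.mono Ioo_subset_Icc_self).stronglyMeasurableAtFilter isOpen_Ioo t ht
    have mgh : StronglyMeasurableAtFilter (fun u => g u * h u) (nhds t) volume :=
      (hghc.mono Ioo_subset_Icc_self).stronglyMeasurableAtFilter isOpen_Ioo t ht
    have hA : HasDerivAt (fun s => ∫ u in y..s, g u * h u) (g t * h t) t :=
      intervalIntegral.integral_hasDerivAt_right kgh mgh cgh
    have hB : HasDerivAt (fun s => ∫ u in y..s, g u) (g t) t :=
      intervalIntegral.integral_hasDerivAt_right kg mg cg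
    have hC : HasDerivAt (fun s => ∫ u in y..s, h u) (h t) t :=
      intervalIntegral.integral_hasDerivAt_right kh mh ch
    have h1 : HasDerivAt (fun s : ℝ => s - y) 1 t := (hasDerivAt_id t).sub_const y
    have := (h1.mul hA).sub (hB.mul hC)
    exact this.congr_deriv (by ring)
  -- the derivative is nonnegative
  have hnonneg : ∀ t ∈ Ioo y x,
      0 ≤ ((∫ u in y..t, g u * h u) + (t - y) * (g t * h t))
        - (g t * (∫ u in y..t, h u) + (∫ u in y..t, g u) * h t) := by
    intro t ht
    have htIcc : Icc y t ⊆ Icc y x := Icc_subset_Icc le_rfl ht.2.le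
    have hu : uIcc y t = Icc y t := uIcc_of_le ht.1.le
    have kg : IntervalIntegrable g volume y t := by
      apply ContinuousOn.intervalIntegrable; rw [hu]; exact hgc.mono htIcc
    have kh : IntervalIntegrable h volume y t := by
      apply ContinuousOn.intervalIntegrable; rw [hu]; exact hhc.mono htIcc
    have kgh : IntervalIntegrable (fun u => g u * h u) volume y t := by
      apply ContinuousOn.intervalIntegrable; rw [hu]; exact hghc.mono htIcc
    have htmem : t ∈ Icc y x := ⟨ht.1.le, ht.2.le⟩
    have key : (0:ℝ) ≤ ∫ u in y..t, (g t - g u) * (h t - h u) := by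
      apply intervalIntegral.integral_nonneg ht.1.le
      intro u hu'
      have humem : u ∈ Icc y x := htIcc hu'
      have h1 : g u ≤ g t := hg humem htmem hu'.2
      have h2 : h u ≤ h t := hh humem htmem hu'.2
      exact mul_nonneg (sub_nonneg.2 h1) (sub_nonneg.2 h2)
    have expand : (∫ u in y..t, (g t - g u) * (h t - h u))
        = ((∫ u in y..t, g u * h u) + (t - y) * (g t * h t))
          - (g t * (∫ u in y..t, h u) + (∫ u in y..t, g u) * h t) := by
      have e1 : (fun u => (g t - g u) * (h t - h u))
          = fun u => (g t * h t - g t * h u) - (h t * g u - g u * h u) := by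
        funext u; ring
      rw [e1, intervalIntegral.integral_sub
            ((_root_.intervalIntegrable_const).sub (kh.const_mul _))
            ((kg.const_mul _).sub kgh),
          intervalIntegral.integral_sub (_root_.intervalIntegrable_const) (kh.const_mul _),
          intervalIntegral.integral_sub (kg.const_mul _) kgh,
          intervalIntegral.integral_const, intervalIntegral.integral_const_mul,
          intervalIntegral.integral_const_mul]
      simp only [smul_eq_mul]
      ring
    rw [← expand]; exact key
  -- F is monotone on [y, x]
  have hFc : ContinuousOn F (Icc y x) := by
    have igh : IntegrableOn (fun u => g u * h u) (uIcc y x) volume := by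
      rw [huIcc]; exact hghc.integrableOn_Icc
    have ig : IntegrableOn g (uIcc y x) volume := by
      rw [huIcc]; exact hgc.integrableOn_Icc
    have ih : IntegrableOn h (uIcc y x) volume := by
      rw [huIcc]; exact hhc.integrableOn_Icc
    have c1 := intervalIntegral.continuousOn_primitive_interval igh
    have c2 := intervalIntegral.continuousOn_primitive_interval ig
    have c3 := intervalIntegral.continuousOn_primitive_interval ih
    rw [huIcc] at c1 c2 c3
    exact ((continuousOn_id.sub continuousOn_const).mul c1).sub (c2.mul c3)
  have hFm : MonotoneOn F (Icc y x) := by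
    apply monotoneOn_of_deriv_nonneg (convex_Icc y x) hFc
    · rw [interior_Icc]
      exact fun t ht => (hderiv t ht).differentiableAt.differentiableWithinAt
    · rw [interior_Icc]
      intro t ht
      rw [(hderiv t ht).deriv]
      exact hnonneg t ht
  have h0 : F y = 0 := by simp [hF]
  have hle : F y ≤ F x := hFm (left_mem_Icc.2 hyx.le) (right_mem_Icc.2 hyx.le) hyx.le
  rw [h0] at hle
  simp only [hF] at hle
  linarith

/-- Let `p ∉ {0,-1}`. If `f : (0,∞) → (0,∞)` is continuously differentiable,
strictly increasing, and `x ↦ f(x)^(p-1) * f'(x)` is increasing, then for all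
`0 < y < x`, `J_p(f(x), f(y)) ≥ (1/(x-y)) ∫_y^x f(u) du`. -/
theorem alzer_ge_integral_mean (p : ℝ) (hp0 : p ≠ 0) (hpm : p ≠ -1)
    (f : ℝ → ℝ)
    (hpos : ∀ x ∈ Ioi (0 : ℝ), 0 < f x)
    (hder : ContDiffOn ℝ 1 f (Ioi 0))
    (hmono : StrictMonoOn f (Ioi 0))
    (hinc : MonotoneOn (fun x => f x ^ (p - 1) * deriv f x) (Ioi 0)) :
    ∀ x y : ℝ, 0 < y → y < x →
      alzer p (f x) (f y) ≥ (1 / (x - y)) * ∫ u in y..x, f u := by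
  intro x y hy hyx
  have hx : (0:ℝ) < x := hy.trans hyx
  have hyI : y ∈ Ioi (0:ℝ) := hy
  have hxI : x ∈ Ioi (0:ℝ) := hx
  have hfy : 0 < f y := hpos y hyI
  have hfx : 0 < f x := hpos x hxI
  have hff : f y < f x := hmono hyI hxI hyx
  have hIcc : Icc y x ⊆ Ioi (0:ℝ) := fun u hu => lt_of_lt_of_le hy hu.1
  have huIcc : uIcc y x = Icc y x := uIcc_of_le hyx.le
  have hfpos : ∀ u ∈ Icc y x, 0 < f u := fun u hu => hpos u (hIcc hu)
  have hdiff : ∀ u ∈ Ioi (0:ℝ), HasDerivAt f (deriv f u) u := fun u hu =>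
    ((hder.differentiableOn one_ne_zero).differentiableAt (Ioi_mem_nhds hu)).hasDerivAt
  have hderivc : ContinuousOn (deriv f) (Ioi 0) :=
    hder.continuousOn_deriv_of_isOpen isOpen_Ioi le_rfl
  have hfc : ContinuousOn f (Icc y x) := hder.continuousOn.mono hIcc
  -- substitution
  have subst : ∀ r : ℝ, (∫ t in f y..f x, t ^ r) = ∫ u in y..x, deriv f u * f u ^ r := by
    intro r
    have hgcont : ContinuousOn (fun t : ℝ => t ^ r) (f '' uIcc y x) := by
      apply ContinuousOn.rpow_const continuousOn_id
      rintro t ⟨u, hu, rfl⟩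
      exact Or.inl (ne_of_gt (hfpos u (huIcc ▸ hu)))
    have := intervalIntegral.integral_comp_smul_deriv'
      (fun u hu => hdiff u (hIcc (huIcc ▸ hu)))
      (hderivc.mono (huIcc ▸ hIcc)) hgcont
    rw [← this]
    simp only [smul_eq_mul, Function.comp]
  -- the two rpow integrals
  have h0not : (0:ℝ) ∉ uIcc (f y) (f x) := by
    rw [uIcc_of_le hff.le]
    intro h0
    exact absurd h0.1 (not_le.2 hfy)
  have Ip : (∫ t in f y..f x, t ^ p) = (f x ^ (p+1) - f y ^ (p+1)) / (p+1) :=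
    integral_rpow (Or.inr ⟨hpm, h0not⟩)
  have Ipm : (∫ t in f y..f x, t ^ (p-1)) = (f x ^ p - f y ^ p) / p := by
    have hne : p - 1 ≠ -1 := by intro h; apply hp0; linarith
    have := integral_rpow (Or.inr ⟨hne, h0not⟩)
    rw [sub_add_cancel] at this
    exact this
  -- sign facts
  have hDpos : 0 < (f x ^ p - f y ^ p) / p := by
    rcases lt_or_gt_of_ne hp0 with hp | hp
    · have : f x ^ p < f y ^ p := Real.rpow_lt_rpow_of_neg hfy hff hp
      exact div_pos_of_neg_of_neg (by linarith) hp
    · have : f y ^ p < f x ^ p := Real.rpow_lt_rpow hfy.le hff hp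
      exact div_pos (by linarith) hp
  have hIpmpos : 0 < ∫ t in f y..f x, t ^ (p-1) := by rw [Ipm]; exact hDpos
  -- alzer as a quotient of integrals
  have halzer : alzer p (f x) (f y)
      = (∫ t in f y..f x, t ^ p) / (∫ t in f y..f x, t ^ (p-1)) := by
    rw [Ip, Ipm]
    have hsub : f x ^ p - f y ^ p ≠ 0 := by
      intro hc
      rw [hc] at hDpos
      simp at hDpos
    have hp1 : p + 1 ≠ 0 := by intro h; apply hpm; linarith
    unfold alzer
    field_simp
  -- identify with integrals of f and h
  set h : ℝ → ℝ := fun u => f u ^ (p - 1) * deriv f u with hh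
  have hNeq : (∫ t in f y..f x, t ^ p) = ∫ u in y..x, f u * h u := by
    rw [subst p]
    apply intervalIntegral.integral_congr
    intro u hu
    have hu' : 0 < f u := hfpos u (huIcc ▸ hu)
    have : f u ^ p = f u * f u ^ (p - 1) := by
      rw [← Real.rpow_one_add' (le_of_lt hu') (by intro hc; apply hp0; linarith)]
      ring_nf
    simp only [hh]
    rw [this]
    ring
  have hDeq : (∫ t in f y..f x, t ^ (p-1)) = ∫ u in y..x, h u := by
    rw [subst (p-1)]
    apply intervalIntegral.integral_congr
    intro u hu
    simp only [hh]
    ring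
  -- Chebyshev
  have hhc : ContinuousOn h (Icc y x) := by
    apply ContinuousOn.mul
    · exact ContinuousOn.rpow_const hfc (fun u hu => Or.inl (ne_of_gt (hfpos u hu)))
    · exact hderivc.mono hIcc
  have cheb := cheb_integral hyx hfc hhc (hmono.monotoneOn.mono hIcc) (hinc.mono hIcc)
  have hxy : (0:ℝ) < x - y := by linarith
  rw [ge_iff_le, halzer, hNeq, hDeq]
  rw [one_div_mul_eq_div, div_le_div_iff₀ hxy (hDeq ▸ hIpmpos)]
  nlinarith [cheb]
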